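/- Let G be a group generated by involutions ρ₀, ρ₁, ρ₂ such that ρ₀ρ₂ = ρ₂ρ₀ and [(ρ₀ρ₁)², ρ₂] = 1. Then the cyclic subgroup generated by [ρ₀, ρ₁] = (ρ₀ρ₁)² is normal in G, and the commutator subgroup G' equals ⟨[ρ₀, ρ₁]⟩ · ⟨[ρ₁, ρ₂]⟩. -/

import Mathlib

open Pointwise
open scoped commutatorElement

/-- If `G` is generated by involutions `ρ₀, ρ₁, ρ₂` with `ρ₀ρ₂ = ρ₂ρ₀` and
`[(ρ₀ρ₁)², ρ₂] = 1`, then `⟨[ρ₀,ρ₁]⟩ = ⟨(ρ₀ρ₁)²⟩` is normal in `G` and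
`G' = ⟨[ρ₀,ρ₁]⟩ · ⟨[ρ₁,ρ₂]⟩` (as a product of sets). -/
theorem derived_eq_product_stmt13 {G : Type*} [Group G] (ρ₀ ρ₁ ρ₂ : G)
    (h0 : ρ₀ ^ 2 = 1) (h1 : ρ₁ ^ 2 = 1) (h2 : ρ₂ ^ 2 = 1)
    (h02 : ρ₀ * ρ₂ = ρ₂ * ρ₀)
    (hgen : Subgroup.closure {ρ₀, ρ₁, ρ₂} = ⊤)
    (hcomm : ((ρ₀ * ρ₁) ^ 2)⁻¹ * ρ₂⁻¹ * (ρ₀ * ρ₁) ^ 2 * ρ₂ = 1) :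
    (Subgroup.zpowers ((ρ₀ * ρ₁) ^ 2)).Normal ∧
      (commutator G : Set G) =
        (Subgroup.zpowers ((ρ₀ * ρ₁) ^ 2) : Set G) *
          (Subgroup.zpowers ((ρ₁ * ρ₂) ^ 2) : Set G) := by
  have m0 : ρ₀ * ρ₀ = 1 := by rw [← sq]; exact h0
  have m1 : ρ₁ * ρ₁ = 1 := by rw [← sq]; exact h1
  have m2 : ρ₂ * ρ₂ = 1 := by rw [← sq]; exact h2
  have i0 : ρ₀⁻¹ = ρ₀ := by rw [← mul_eq_one_iff_inv_eq, m0]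
  have i1 : ρ₁⁻¹ = ρ₁ := by rw [← mul_eq_one_iff_inv_eq, m1]
  have i2 : ρ₂⁻¹ = ρ₂ := by rw [← mul_eq_one_iff_inv_eq, m2]
  have c0 : ∀ x : G, ρ₀ * (ρ₀ * x) = x := fun x => by rw [← mul_assoc, m0, one_mul]
  have c1 : ∀ x : G, ρ₁ * (ρ₁ * x) = x := fun x => by rw [← mul_assoc, m1, one_mul]
  have c2 : ∀ x : G, ρ₂ * (ρ₂ * x) = x := fun x => by rw [← mul_assoc, m2, one_mul]
  have w02b : ρ₂ * ρ₀ = ρ₀ * ρ₂ := h02.symm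
  have w02 : ∀ x : G, ρ₂ * (ρ₀ * x) = ρ₀ * (ρ₂ * x) := fun x => by
    rw [← mul_assoc, w02b, mul_assoc]
  have hca : ρ₂ * (ρ₀ * ρ₁) ^ 2 = (ρ₀ * ρ₁) ^ 2 * ρ₂ := by
    have e1 : ((ρ₀ * ρ₁) ^ 2)⁻¹ * ρ₂⁻¹ * (ρ₀ * ρ₁) ^ 2 = ρ₂⁻¹ :=
      mul_eq_one_iff_eq_inv.mp hcomm
    have e2 : ρ₂⁻¹ * (ρ₀ * ρ₁) ^ 2 =
        (ρ₀ * ρ₁) ^ 2 * (((ρ₀ * ρ₁) ^ 2)⁻¹ * ρ₂⁻¹ * (ρ₀ * ρ₁) ^ 2) := by group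
    rw [e1] at e2
    rw [i2] at e2
    exact e2
  have w212b : ρ₂ * (ρ₁ * (ρ₀ * ρ₁)) = ρ₁ * (ρ₀ * (ρ₁ * ρ₂)) := by
    have h' := congrArg (fun x => ρ₀ * x) hca
    simp only [sq, mul_assoc, w02, c0, c1, c2] at h'
    exact h'
  have w212 : ∀ x : G, ρ₂ * (ρ₁ * (ρ₀ * (ρ₁ * x))) = ρ₁ * (ρ₀ * (ρ₁ * (ρ₂ * x))) := fun x => by
    have h' : (ρ₂ * (ρ₁ * (ρ₀ * ρ₁))) * x = (ρ₁ * (ρ₀ * (ρ₁ * ρ₂))) * x := by rw [w212b]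
    simpa [mul_assoc] using h'
  -- the six conjugation facts
  have f1 : ρ₀ * (ρ₀ * ρ₁) ^ 2 * ρ₀⁻¹ = ((ρ₀ * ρ₁) ^ 2)⁻¹ := by
    simp only [sq, mul_inv_rev, mul_one, i0, i1, mul_assoc, c0, c1, c2, m0, m1, m2, w02, w02b, w212, w212b]
  have f2 : ρ₁ * (ρ₀ * ρ₁) ^ 2 * ρ₁⁻¹ = ((ρ₀ * ρ₁) ^ 2)⁻¹ := by
    simp only [sq, mul_inv_rev, mul_one, i0, i1, mul_assoc, c0, c1, c2, m0, m1, m2, w02, w02b, w212, w212b]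
  have f3 : ρ₂ * (ρ₀ * ρ₁) ^ 2 * ρ₂⁻¹ = (ρ₀ * ρ₁) ^ 2 := by
    simp only [sq, mul_inv_rev, mul_one, i0, i1, i2, mul_assoc, c0, c1, c2, m0, m1, m2, w02, w02b, w212, w212b]
  have f4 : ρ₀ * (ρ₁ * ρ₂) ^ 2 * ρ₀⁻¹ =
      (ρ₀ * ρ₁) ^ 2 * (ρ₁ * ρ₂) ^ 2 * ((ρ₀ * ρ₁) ^ 2)⁻¹ := by
    simp only [sq, mul_inv_rev, mul_one, i0, i1, i2, mul_assoc, c0, c1, c2, m0, m1, m2, w02, w02b, w212, w212b]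
  have f5 : ρ₁ * (ρ₁ * ρ₂) ^ 2 * ρ₁⁻¹ = ((ρ₁ * ρ₂) ^ 2)⁻¹ := by
    simp only [sq, mul_inv_rev, mul_one, i1, i2, mul_assoc, c0, c1, c2, m0, m1, m2, w02, w02b, w212, w212b]
  have f6 : ρ₂ * (ρ₁ * ρ₂) ^ 2 * ρ₂⁻¹ = ((ρ₁ * ρ₂) ^ 2)⁻¹ := by
    simp only [sq, mul_inv_rev, mul_one, i1, i2, mul_assoc, c0, c1, c2, m0, m1, m2, w02, w02b, w212, w212b]
  -- helper: a subgroup stable under conjugation by the generators is normal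
  have normal_of : ∀ H : Subgroup G,
      (∀ ρ, ρ ∈ ({ρ₀, ρ₁, ρ₂} : Set G) → ∀ x ∈ H, ρ * x * ρ⁻¹ ∈ H) → H.Normal := by
    intro H hH
    have key : ∀ ρ ∈ ({ρ₀, ρ₁, ρ₂} : Set G), ρ ∈ Subgroup.normalizer (H : Set G) := by
      intro ρ hρ
      have mρ : ρ * ρ = 1 := by
        have hρ' := hρ
        simp only [Set.mem_insert_iff, Set.mem_singleton_iff] at hρ'
        rcases hρ' with rfl | rfl | rfl <;> assumption
      have iρ : ρ⁻¹ = ρ := by rw [← mul_eq_one_iff_inv_eq, mρ]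
      rw [Subgroup.mem_normalizer_iff]
      intro x
      constructor
      · exact fun hx => hH ρ hρ x hx
      · intro hx
        have h' := hH ρ hρ _ hx
        have e : ρ * (ρ * x * ρ⁻¹) * ρ⁻¹ = x := by
          rw [iρ]
          calc ρ * (ρ * x * ρ) * ρ = (ρ * ρ) * x * (ρ * ρ) := by group
          _ = x := by rw [mρ, one_mul, mul_one]
        rwa [e] at h'
    refine Subgroup.normalizer_eq_top_iff.mp (top_unique ?_)
    rw [← hgen]
    exact (Subgroup.closure_le _).mpr key
  -- Part 1 : zpowers a is normal
  have hA : (Subgroup.zpowers ((ρ₀ * ρ₁) ^ 2)).Normal := by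
    apply normal_of
    intro ρ hρ x hx
    obtain ⟨k, rfl⟩ := Subgroup.mem_zpowers_iff.mp hx
    simp only [Set.mem_insert_iff, Set.mem_singleton_iff] at hρ
    rcases hρ with rfl | rfl | rfl
    · rw [← conj_zpow, f1]
      exact Subgroup.zpow_mem _ (Subgroup.inv_mem _ (Subgroup.mem_zpowers _)) k
    · rw [← conj_zpow, f2]
      exact Subgroup.zpow_mem _ (Subgroup.inv_mem _ (Subgroup.mem_zpowers _)) k
    · rw [← conj_zpow, f3]
      exact Subgroup.zpow_mem _ (Subgroup.mem_zpowers _) k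
  -- N := closure {a, b}
  set N := Subgroup.closure ({(ρ₀ * ρ₁) ^ 2, (ρ₁ * ρ₂) ^ 2} : Set G) with hNdef
  have haN : (ρ₀ * ρ₁) ^ 2 ∈ N := Subgroup.subset_closure (Set.mem_insert _ _)
  have hbN : (ρ₁ * ρ₂) ^ 2 ∈ N :=
    Subgroup.subset_closure (Set.mem_insert_iff.mpr (Or.inr rfl))
  have hNnormal : N.Normal := by
    apply normal_of
    intro ρ hρ x hx
    refine Subgroup.closure_induction (fun y hy => ?_) ?_ ?_ ?_ hx
    · simp only [Set.mem_insert_iff, Set.mem_singleton_iff] at hρ hy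
      rcases hρ with rfl | rfl | rfl <;> rcases hy with rfl | rfl
      · rw [f1]; exact Subgroup.inv_mem _ haN
      · rw [f4]
        exact Subgroup.mul_mem _ (Subgroup.mul_mem _ haN hbN) (Subgroup.inv_mem _ haN)
      · rw [f2]; exact Subgroup.inv_mem _ haN
      · rw [f5]; exact Subgroup.inv_mem _ hbN
      · rw [f3]; exact haN
      · rw [f6]; exact Subgroup.inv_mem _ hbN
    · simpa using Subgroup.one_mem N
    · intro x y _ _ px py
      have e : ρ * (x * y) * ρ⁻¹ = (ρ * x * ρ⁻¹) * (ρ * y * ρ⁻¹) := by group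
      rw [e]; exact Subgroup.mul_mem _ px py
    · intro x _ px
      have e : ρ * x⁻¹ * ρ⁻¹ = (ρ * x * ρ⁻¹)⁻¹ := by group
      rw [e]; exact Subgroup.inv_mem _ px
  haveI := hNnormal
  -- commutator identities
  have hc01 : ⁅ρ₀, ρ₁⁆ = (ρ₀ * ρ₁) ^ 2 := by
    rw [commutatorElement_def, i0, i1, sq]; group
  have hc12 : ⁅ρ₁, ρ₂⁆ = (ρ₁ * ρ₂) ^ 2 := by
    rw [commutatorElement_def, i1, i2, sq]; group
  -- pass to the quotient
  have key1 : ∀ x y : G, ⁅x, y⁆ ∈ N →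
      Commute (QuotientGroup.mk' N x) (QuotientGroup.mk' N y) := by
    intro x y hxy
    refine commutatorElement_eq_one_iff_commute.mp ?_
    rw [← map_commutatorElement]
    exact (QuotientGroup.eq_one_iff _).mpr hxy
  have com01 : Commute (QuotientGroup.mk' N ρ₀) (QuotientGroup.mk' N ρ₁) :=
    key1 _ _ (hc01 ▸ haN)
  have com12 : Commute (QuotientGroup.mk' N ρ₁) (QuotientGroup.mk' N ρ₂) :=
    key1 _ _ (hc12 ▸ hbN)
  have com02 : Commute (QuotientGroup.mk' N ρ₀) (QuotientGroup.mk' N ρ₂) :=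
    Commute.map (h02 : Commute ρ₀ ρ₂) _
  have genQ : Subgroup.closure (QuotientGroup.mk' N '' {ρ₀, ρ₁, ρ₂}) = ⊤ := by
    rw [← MonoidHom.map_closure, hgen]
    exact Subgroup.map_top_of_surjective _ (QuotientGroup.mk'_surjective N)
  have comS : ∀ u ∈ QuotientGroup.mk' N '' {ρ₀, ρ₁, ρ₂},
      ∀ v ∈ QuotientGroup.mk' N '' {ρ₀, ρ₁, ρ₂}, Commute u v := by
    rintro u ⟨x, hx, rfl⟩ v ⟨y, hy, rfl⟩
    simp only [Set.mem_insert_iff, Set.mem_singleton_iff] at hx hy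
    rcases hx with rfl | rfl | rfl <;> rcases hy with rfl | rfl | rfl <;>
      first
        | exact Commute.refl _
        | exact com01 | exact com01.symm
        | exact com02 | exact com02.symm
        | exact com12 | exact com12.symm
  have step1 : ∀ u ∈ QuotientGroup.mk' N '' {ρ₀, ρ₁, ρ₂}, ∀ v : G ⧸ N, Commute u v := by
    intro u hu v
    have hle : Subgroup.closure (QuotientGroup.mk' N '' {ρ₀, ρ₁, ρ₂}) ≤
        Subgroup.centralizer {u} := by
      refine (Subgroup.closure_le _).mpr fun t ht => Subgroup.mem_centralizer_iff.mpr ?_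
      intro h hh
      rw [Set.mem_singleton_iff] at hh
      subst hh
      exact comS h hu t ht
    have hv : v ∈ Subgroup.centralizer {u} := hle (genQ ▸ Subgroup.mem_top v)
    exact Subgroup.mem_centralizer_iff.mp hv u rfl
  have hab : ∀ u v : G ⧸ N, Commute u v := by
    intro u v
    have hle : Subgroup.closure (QuotientGroup.mk' N '' {ρ₀, ρ₁, ρ₂}) ≤
        Subgroup.centralizer {v} := by
      refine (Subgroup.closure_le _).mpr fun t ht => Subgroup.mem_centralizer_iff.mpr ?_
      intro h hh
      rw [Set.mem_singleton_iff] at hh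
      subst hh
      exact (step1 t ht h).symm
    have hu : u ∈ Subgroup.centralizer {v} := hle (genQ ▸ Subgroup.mem_top u)
    exact (Subgroup.mem_centralizer_iff.mp hu v rfl).symm
  -- commutator G = N
  have hle : commutator G ≤ N := by
    rw [commutator_def, Subgroup.commutator_le]
    intro g _ h _
    have e := map_commutatorElement (QuotientGroup.mk' N) g h
    refine (QuotientGroup.eq_one_iff _).mp ?_
    calc (QuotientGroup.mk' N) ⁅g, h⁆
        = ⁅QuotientGroup.mk' N g, QuotientGroup.mk' N h⁆ := e
      _ = 1 := commutatorElement_eq_one_iff_commute.mpr (hab _ _)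
  have hge : N ≤ commutator G := by
    refine (Subgroup.closure_le _).mpr ?_
    rintro x hx
    simp only [Set.mem_insert_iff, Set.mem_singleton_iff] at hx
    rcases hx with rfl | rfl
    · exact hc01 ▸ commutator_def G ▸
        Subgroup.commutator_mem_commutator (Subgroup.mem_top _) (Subgroup.mem_top _)
    · exact hc12 ▸ commutator_def G ▸
        Subgroup.commutator_mem_commutator (Subgroup.mem_top _) (Subgroup.mem_top _)
  have hNeq : commutator G = N := le_antisymm hle hge
  refine ⟨hA, ?_⟩
  have hNsup : N = Subgroup.zpowers ((ρ₀ * ρ₁) ^ 2) ⊔ Subgroup.zpowers ((ρ₁ * ρ₂) ^ 2) := by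
    rw [Subgroup.zpowers_eq_closure, Subgroup.zpowers_eq_closure, ← Subgroup.closure_union,
      Set.singleton_union]
  rw [hNeq, hNsup]
  haveI := hA
  exact Subgroup.normal_mul _ _
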